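/- arXiv:1711.05561 — 3 statements merged into one kernel-verified Lean document; each statement's English description precedes it below -/
import Mathlib

section
/- Fairness property: consider the optimization max over p ∈ ℝ^{I×J}_{>0} of Σ_{i,j} z_{ij} R̄_i u(p_{ij}) subject to Σ_{i,j} R̄_i z_{ij} p_{ij} ≤ δ, where u is strictly increasing, strictly concave, differentiable with u'(x) → ∞ as x → 0, z_{ij} > 0, R̄_i > 0, δ > 0. Then at the optimum all p_{ij} are equal to the common value p = δ / (Σ_{i,j} R̄_i z_{ij}). -/
open Finset

/-- Fairness property: the maximizer of `Σ z_{ij} R̄_i u(p_{ij})` over positive `p`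
subject to `Σ R̄_i z_{ij} p_{ij} ≤ δ` is the constant allocation
`p_{ij} = δ/(Σ R̄_k z_{kl})`: it is feasible and strictly better than any other
feasible allocation. -/
theorem fairness_property
    (I J : ℕ) (hI : 1 ≤ I) (hJ : 1 ≤ J)
    (z : Fin I → Fin J → ℝ) (Rbar : Fin I → ℝ) (δ : ℝ)
    (hz : ∀ i j, 0 < z i j) (hR : ∀ i, 0 < Rbar i) (hδ : 0 < δ)
    (u u' : ℝ → ℝ)
    (humono : StrictMonoOn u (Set.Ioi 0))
    (huconc : StrictConcaveOn ℝ (Set.Ioi 0) u)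
    (hu : ∀ x : ℝ, 0 < x → HasDerivAt u (u' x) x)
    (hu'top : Filter.Tendsto u' (nhdsWithin 0 (Set.Ioi 0)) Filter.atTop)
    (pstar : ℝ) (hpstar : pstar = δ / (∑ i, ∑ j, Rbar i * z i j)) :
    (∑ i, ∑ j, Rbar i * z i j * pstar ≤ δ) ∧
    ∀ q : Fin I → Fin J → ℝ, (∀ i j, 0 < q i j) →
      (∑ i, ∑ j, Rbar i * z i j * q i j ≤ δ) →
      q ≠ (fun _ _ => pstar) →
      ∑ i, ∑ j, z i j * Rbar i * u (q i j) <
        ∑ i, ∑ j, z i j * Rbar i * u pstar := by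
  haveI : NeZero I := ⟨by omega⟩
  haveI : NeZero J := ⟨by omega⟩
  set S : ℝ := ∑ i, ∑ j, Rbar i * z i j with hS
  have hSpos : 0 < S := by
    refine Finset.sum_pos (fun i _ => Finset.sum_pos (fun j _ => ?_) Finset.univ_nonempty)
      Finset.univ_nonempty
    exact mul_pos (hR i) (hz i j)
  have hpstar_pos : 0 < pstar := by rw [hpstar]; exact div_pos hδ hSpos
  have hδeq : δ = S * pstar := by
    rw [hpstar]; field_simp
  have hfeas : ∑ i, ∑ j, Rbar i * z i j * pstar ≤ δ := by
    have h2 : ∑ i, ∑ j, Rbar i * z i j * pstar = S * pstar := by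
      rw [hS, Finset.sum_mul]
      exact Finset.sum_congr rfl fun i _ => by rw [Finset.sum_mul]
    rw [h2, ← hδeq]
  refine ⟨hfeas, ?_⟩
  intro q hq hqfeas hqne
  -- weights on the product type
  set w : Fin I × Fin J → ℝ := fun x => Rbar x.1 * z x.1 x.2 / S with hw
  have hwpos : ∀ x : Fin I × Fin J, 0 < w x := fun x => by
    exact div_pos (mul_pos (hR x.1) (hz x.1 x.2)) hSpos
  have hwsum : ∑ x : Fin I × Fin J, w x = 1 := by
    have : ∑ x : Fin I × Fin J, w x = (∑ i, ∑ j, Rbar i * z i j) / S := by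
      rw [Finset.sum_div, Fintype.sum_prod_type]
      exact Finset.sum_congr rfl fun i _ => by rw [Finset.sum_div]
    rw [this, ← hS, div_self hSpos.ne']
  have h1 : ∑ x : Fin I × Fin J, w x • q x.1 x.2
      = (∑ i, ∑ j, Rbar i * z i j * q i j) / S := by
    rw [Finset.sum_div, Fintype.sum_prod_type]
    refine Finset.sum_congr rfl fun i _ => ?_
    rw [Finset.sum_div]
    refine Finset.sum_congr rfl fun j _ => ?_
    simp only [hw, smul_eq_mul]
    field_simp
  have hMle : ∑ x : Fin I × Fin J, w x • q x.1 x.2 ≤ pstar := by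
    rw [h1, hpstar]
    gcongr
  have hMpos : 0 < ∑ x : Fin I × Fin J, w x • q x.1 x.2 := by
    refine Finset.sum_pos (fun x _ => ?_) Finset.univ_nonempty
    exact mul_pos (hwpos x) (hq x.1 x.2)
  -- key: Σ w u(q) < u(pstar)
  have hkey : ∑ x : Fin I × Fin J, w x • u (q x.1 x.2) < u pstar := by
    by_cases hconst : ∃ a b : Fin I × Fin J, q a.1 a.2 ≠ q b.1 b.2
    · obtain ⟨a, b, hab⟩ := hconst
      have hjensen := huconc.lt_map_sum (t := Finset.univ) (w := w)
        (p := fun x => q x.1 x.2) (fun x _ => hwpos x) hwsum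
        (fun x _ => hq x.1 x.2) ⟨a, Finset.mem_univ a, b, Finset.mem_univ b, hab⟩
      refine hjensen.trans_le ?_
      rcases eq_or_lt_of_le hMle with h | h
      · rw [h]
      · exact (humono (Set.mem_Ioi.mpr hMpos) (Set.mem_Ioi.mpr hpstar_pos) h).le
    · push_neg at hconst
      -- q is constant, say equal to c
      set c : ℝ := q 0 0 with hc
      have hqc : ∀ i j, q i j = c := fun i j => hconst (i, j) (0, 0)
      have hcne : c ≠ pstar := by
        intro h
        exact hqne (funext fun i => funext fun j => by rw [hqc i j, h])
      have hclt : c < pstar := by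
        rcases lt_or_ge c pstar with h | h
        · exact h
        rcases eq_or_lt_of_le h with h' | h'
        · exact absurd h'.symm hcne
        exfalso
        have hsc : ∑ i, ∑ j, Rbar i * z i j * q i j = S * c := by
          rw [hS, Finset.sum_mul]
          refine Finset.sum_congr rfl fun i _ => ?_
          rw [Finset.sum_mul]
          exact Finset.sum_congr rfl fun j _ => by rw [hqc]
        rw [hsc, hδeq] at hqfeas
        exact absurd ((mul_le_mul_iff_right₀ hSpos).mp hqfeas) (not_le.mpr h')
      have hcpos : 0 < c := hq 0 0
      have hcc : ∑ x : Fin I × Fin J, w x • u (q x.1 x.2) = u c := by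
        have h3 : ∀ x : Fin I × Fin J, w x • u (q x.1 x.2) = w x * u c := fun x => by
          rw [hqc, smul_eq_mul]
        rw [Finset.sum_congr rfl fun x _ => h3 x, ← Finset.sum_mul, hwsum, one_mul]
      rw [hcc]
      exact humono (Set.mem_Ioi.mpr hcpos) (Set.mem_Ioi.mpr hpstar_pos) hclt
  -- conclude by multiplying by S
  have hLHS : ∑ i, ∑ j, z i j * Rbar i * u (q i j)
      = S * ∑ x : Fin I × Fin J, w x • u (q x.1 x.2) := by
    rw [Finset.mul_sum, Fintype.sum_prod_type]
    refine Finset.sum_congr rfl fun i _ => ?_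
    refine Finset.sum_congr rfl fun j _ => ?_
    simp only [hw, smul_eq_mul]
    rw [div_mul_eq_mul_div, ← mul_div_assoc, mul_div_cancel_left₀ _ hSpos.ne',
      mul_comm (Rbar i) (z i j)]
  have hRHS : ∑ i, ∑ j, z i j * Rbar i * u pstar = S * u pstar := by
    rw [hS, Finset.sum_mul]
    refine Finset.sum_congr rfl fun i _ => ?_
    rw [Finset.sum_mul]
    exact Finset.sum_congr rfl fun j _ => by ring
  rw [hLHS, hRHS]
  exact mul_lt_mul_of_pos_left hkey hSpos
end

section
/- The product-form distribution π(n) = (1−ρ)(Σ_i n_i)! Π_i ρ_i^{n_i}/n_i! is stationary for the multiclass processor-sharing Markov chain: for all n ∈ ℕ^I, Σ_i λ_i·π(n) + Σ_{i : n_i>0} (n_i/(μ_i Σ_k n_k))·π(n) = Σ_i λ_i·π(n − e_i)·1{n_i > 0} + Σ_i ((n_i+1)/(μ_i (Σ_k n_k + 1)))·π(n + e_i), where ρ_i = λ_i μ_i and ρ = Σρ_i < 1. (Here class-i arrivals occur at rate λ_i and class-i departures from state n occur at rate n_i/(μ_i Σ_k n_k).) -/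
open Finset

private lemma pi_up_key (I : ℕ) (ρ : Fin I → ℝ)
    (π : (Fin I → ℕ) → ℝ)
    (hπ : ∀ n, π n = (1 - ∑ i, ρ i) * (Nat.factorial (∑ i, n i)) *
        ∏ i, ρ i ^ (n i) / (Nat.factorial (n i)))
    (n : Fin I → ℕ) (i : Fin I) :
    π (Function.update n i (n i + 1)) * ((n i : ℝ) + 1) =
      π n * (((∑ k, n k : ℕ) : ℝ) + 1) * ρ i := by
  have hsum : (∑ k, Function.update n i (n i + 1) k) = (∑ k, n k) + 1 := by
    rw [Finset.sum_update_of_mem (Finset.mem_univ i),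
      ← Finset.add_sum_erase Finset.univ n (Finset.mem_univ i), Finset.erase_eq]
    omega
  have hprod : (∏ k, ρ k ^ (Function.update n i (n i + 1) k) /
      (Nat.factorial (Function.update n i (n i + 1) k) : ℝ)) =
      (ρ i ^ (n i + 1) / (Nat.factorial (n i + 1) : ℝ)) *
        ∏ k ∈ Finset.univ.erase i, ρ k ^ (n k) / (Nat.factorial (n k) : ℝ) := by
    rw [← Finset.mul_prod_erase Finset.univ _ (Finset.mem_univ i), Function.update_self]
    congr 1
    exact Finset.prod_congr rfl fun k hk => by
      rw [Function.update_of_ne (Finset.ne_of_mem_erase hk)]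
  have hprodn : (∏ k, ρ k ^ (n k) / (Nat.factorial (n k) : ℝ)) =
      (ρ i ^ (n i) / (Nat.factorial (n i) : ℝ)) *
        ∏ k ∈ Finset.univ.erase i, ρ k ^ (n k) / (Nat.factorial (n k) : ℝ) :=
    (Finset.mul_prod_erase Finset.univ _ (Finset.mem_univ i)).symm
  rw [hπ, hπ, hsum, hprod, hprodn]
  have h1 : ((Nat.factorial ((∑ k, n k) + 1) : ℕ) : ℝ) =
      (((∑ k, n k : ℕ) : ℝ) + 1) * (Nat.factorial (∑ k, n k) : ℝ) := by
    rw [Nat.factorial_succ]; push_cast; ring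
  have h2 : ((Nat.factorial (n i + 1) : ℕ) : ℝ) =
      ((n i : ℝ) + 1) * (Nat.factorial (n i) : ℝ) := by
    rw [Nat.factorial_succ]; push_cast; ring
  rw [h1, h2, pow_succ]
  have hfi : (Nat.factorial (n i) : ℝ) ≠ 0 := by
    exact_mod_cast Nat.factorial_ne_zero (n i)
  have hni : ((n i : ℝ) + 1) ≠ 0 := by positivity
  field_simp

/-- The product-form distribution is stationary for the multiclass
processor-sharing Markov chain: the global balance equations hold. -/
theorem product_form_stationary
    (I : ℕ) (hI : 1 ≤ I) (lam μ : Fin I → ℝ)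
    (hlam : ∀ i, 0 < lam i) (hμ : ∀ i, 0 < μ i)
    (ρ : Fin I → ℝ) (hρ : ∀ i, ρ i = lam i * μ i) (hρsum : ∑ i, ρ i < 1)
    (π : (Fin I → ℕ) → ℝ)
    (hπ : ∀ n, π n = (1 - ∑ i, ρ i) * (Nat.factorial (∑ i, n i)) *
        ∏ i, ρ i ^ (n i) / (Nat.factorial (n i))) :
    ∀ n : Fin I → ℕ,
      (∑ i, lam i) * π n +
        (∑ i, if 0 < n i then (n i : ℝ) / (μ i * ∑ k, (n k : ℝ)) else 0) * π n =
      (∑ i, if 0 < n i then lam i * π (Function.update n i (n i - 1)) else 0) +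
        ∑ i, ((n i : ℝ) + 1) / (μ i * ((∑ k, (n k : ℝ)) + 1)) *
          π (Function.update n i (n i + 1)) := by
  intro n
  have hcast : (∑ k, (n k : ℝ)) = ((∑ k, n k : ℕ) : ℝ) := by push_cast; rfl
  have up_eq : ∀ i, ((n i : ℝ) + 1) / (μ i * ((∑ k, (n k : ℝ)) + 1)) *
      π (Function.update n i (n i + 1)) = lam i * π n := by
    intro i
    have key := pi_up_key I ρ π hπ n i
    have hμi : μ i ≠ 0 := (hμ i).ne'
    have hS1 : ((∑ k, (n k : ℝ)) + 1) ≠ 0 := by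
      rw [hcast]; positivity
    have hni : ((n i : ℝ) + 1) ≠ 0 := by positivity
    rw [hρ i, ← hcast] at key
    field_simp
    linear_combination key
  have down_eq : ∀ i, (if 0 < n i then (n i : ℝ) / (μ i * ∑ k, (n k : ℝ)) else 0) * π n =
      if 0 < n i then lam i * π (Function.update n i (n i - 1)) else 0 := by
    intro i
    by_cases h : 0 < n i
    · simp only [if_pos h]
      set m : Fin I → ℕ := Function.update n i (n i - 1) with hm
      have key := pi_up_key I ρ π hπ m i
      have hmi : m i = n i - 1 := Function.update_self i _ n
      have hup : Function.update m i (m i + 1) = n := by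
        rw [hmi, hm, Function.update_idem, Nat.sub_add_cancel h,
          Function.update_eq_self]
      have hsm : (∑ k, m k) = (∑ k, n k) - 1 := by
        rw [hm, Finset.sum_update_of_mem (Finset.mem_univ i),
          ← Finset.add_sum_erase Finset.univ n (Finset.mem_univ i), Finset.erase_eq]
        omega
      have hSpos : 0 < ∑ k, n k :=
        lt_of_lt_of_le h (Finset.single_le_sum (fun k _ => Nat.zero_le _) (Finset.mem_univ i))
      have hSm : (((∑ k, m k : ℕ) : ℝ) + 1) = ((∑ k, n k : ℕ) : ℝ) := by
        rw [hsm]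
        have h' : (∑ k, n k) - 1 + 1 = ∑ k, n k := Nat.sub_add_cancel hSpos
        exact_mod_cast congrArg (Nat.cast (R := ℝ)) h'
      have hmi' : ((m i : ℝ) + 1) = (n i : ℝ) := by
        rw [hmi]
        have h' : n i - 1 + 1 = n i := Nat.sub_add_cancel h
        exact_mod_cast congrArg (Nat.cast (R := ℝ)) h'
      rw [hup, hSm, hmi'] at key
      have hμi : μ i ≠ 0 := (hμ i).ne'
      have hS : (∑ k, (n k : ℝ)) ≠ 0 := by
        rw [hcast]; exact (Nat.cast_pos.mpr hSpos).ne'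
      rw [hρ i, ← hcast] at key
      field_simp
      linear_combination key
    · simp [h]
  calc (∑ i, lam i) * π n +
        (∑ i, if 0 < n i then (n i : ℝ) / (μ i * ∑ k, (n k : ℝ)) else 0) * π n
      = (∑ i, (if 0 < n i then (n i : ℝ) / (μ i * ∑ k, (n k : ℝ)) else 0) * π n) +
        ∑ i, lam i * π n := by rw [Finset.sum_mul, Finset.sum_mul]; ring
    _ = _ := by
        congr 1
        · exact Finset.sum_congr rfl fun i _ => down_eq i
        · exact Finset.sum_congr rfl fun i _ => (up_eq i).symm
end

section
/- Identity interpreting the objective: let u : (0,∞) → ℝ be differentiable, B, D nonnegative random variables with D > 0 a.s., γ > 0, and define g(x) = γ E[min{Dx, B}]. Then for 0 < a < b in the domain, γ·E[D·(u(min{b, B/D}) − u(min{a, B/D}))] = ∫_a^b γ·E[D·1{Dx < B}]·u'(x) dx, assuming suitable integrability (e.g., B, D bounded and u' continuous and bounded on [a,b]). -/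
open MeasureTheory intervalIntegral

/-- FTC for the truncated function `x ↦ u (min x r)`. -/
lemma ftc_min_aux (u u' : ℝ → ℝ)
    (hu : ∀ x : ℝ, 0 < x → HasDerivAt u (u' x) x)
    (hu'cont : ContinuousOn u' (Set.Ioi 0))
    {a b r : ℝ} (ha : 0 < a) (hab : a < b) :
    u (min b r) - u (min a r) = ∫ x in a..b, (if x < r then u' x else 0) := by
  rcases le_or_gt r a with hra | har
  · have h1 : min b r = r := min_eq_right (hra.trans hab.le)
    have h2 : min a r = r := min_eq_right hra
    rw [h1, h2, sub_self]
    symm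
    rw [intervalIntegral.integral_congr (g := fun _ => (0 : ℝ))]
    · simp
    · intro x hx
      rw [Set.uIcc_of_le hab.le] at hx
      have : ¬ x < r := not_lt.2 (hra.trans hx.1)
      simp [this]
  · -- a < r
    set c := min b r with hc
    have hac : a ≤ c := le_min hab.le har.le
    have hcb : c ≤ b := min_le_left _ _
    have hminA : min a r = a := min_eq_left har.le
    have hnull : (volume : Measure ℝ) ({r, b} : Set ℝ) = 0 :=
      ((Set.finite_singleton b).insert r).measure_zero volume
    have hae : ∀ᵐ x : ℝ, x ∈ Set.uIoc a b →
        (if x < r then u' x else 0) = Set.indicator {x | x ≤ c} u' x := by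
      filter_upwards [compl_mem_ae_iff.2 hnull] with x hx hxI
      simp only [Set.mem_compl_iff, Set.mem_insert_iff, Set.mem_singleton_iff,
        not_or] at hx
      rw [Set.uIoc_of_le hab.le] at hxI
      have hxb : x < b := lt_of_le_of_ne hxI.2 hx.2
      by_cases hxr : x < r
      · have : x ≤ c := le_min hxb.le hxr.le
        simp [hxr, Set.indicator_of_mem, this]
      · have hrx : r < x := lt_of_le_of_ne (not_lt.1 hxr) (Ne.symm hx.1)
        have : ¬ x ≤ c := not_le.2 (lt_of_le_of_lt (min_le_right _ _) hrx)
        simp [hxr, Set.indicator_of_notMem, this]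
    rw [intervalIntegral.integral_congr_ae hae,
      intervalIntegral.integral_indicator ⟨hac, hcb⟩, hminA]
    have hsub : Set.uIcc a c ⊆ Set.Ioi 0 := by
      rw [Set.uIcc_of_le hac]
      intro x hx
      exact lt_of_lt_of_le ha hx.1
    exact (intervalIntegral.integral_eq_sub_of_hasDerivAt
      (fun x hx => hu x (hsub hx)) ((hu'cont.mono hsub).intervalIntegrable)).symm

/-- Identity interpreting the objective function: for differentiable `u` with
continuous derivative, bounded nonnegative `B, D` with `D > 0` a.s., and
`0 < a < b`,
`γ E[D (u(min{b, B/D}) − u(min{a, B/D}))] = ∫_a^b γ E[D 1{Dx < B}] u'(x) dx`. -/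
theorem objective_identity
    {Ω : Type*} [MeasurableSpace Ω] (μ : Measure Ω) [IsProbabilityMeasure μ]
    (γ : ℝ) (hγ : 0 < γ)
    (B D : Ω → ℝ) (hBm : Measurable B) (hDm : Measurable D)
    (hBpos : ∀ ω, 0 ≤ B ω) (hDpos : ∀ᵐ ω ∂μ, 0 < D ω)
    (CB CD : ℝ) (hBbdd : ∀ ω, B ω ≤ CB) (hDbdd : ∀ ω, D ω ≤ CD)
    (hratio : ∀ x : ℝ, μ {ω | B ω / D ω = x} = 0)
    (u u' : ℝ → ℝ) (hu : ∀ x : ℝ, 0 < x → HasDerivAt u (u' x) x)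
    (hu'cont : ContinuousOn u' (Set.Ioi 0))
    (a b : ℝ) (ha : 0 < a) (hab : a < b) :
    γ * ∫ ω, D ω * (u (min b (B ω / D ω)) - u (min a (B ω / D ω))) ∂μ =
      ∫ x in a..b, γ * (∫ ω, (if D ω * x < B ω then D ω else 0) ∂μ) * u' x := by
  set ν : Measure ℝ := volume.restrict (Set.Ioc a b) with hν
  have hνfin : IsFiniteMeasure ν := by
    constructor
    rw [hν, Measure.restrict_apply_univ, Real.volume_Ioc]
    exact ENNReal.ofReal_lt_top
  haveI := hνfin
  -- bound for u' on [a,b]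
  obtain ⟨M, hM⟩ : ∃ M, ∀ x ∈ Set.Icc a b, ‖u' x‖ ≤ M := by
    have hsub : Set.Icc a b ⊆ Set.Ioi 0 := fun x hx => lt_of_lt_of_le ha hx.1
    exact (isCompact_Icc).exists_bound_of_continuousOn (hu'cont.mono hsub)
  set f : Ω → ℝ → ℝ := fun ω x => if D ω * x < B ω then D ω * u' x else 0 with hf
  -- Step A : pointwise identity
  have stepA : ∫ ω, D ω * (u (min b (B ω / D ω)) - u (min a (B ω / D ω))) ∂μ
      = ∫ ω, ∫ x, f ω x ∂ν ∂μ := by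
    apply MeasureTheory.integral_congr_ae
    filter_upwards [hDpos] with ω hD
    have h1 := ftc_min_aux u u' hu hu'cont (r := B ω / D ω) ha hab
    calc D ω * (u (min b (B ω / D ω)) - u (min a (B ω / D ω)))
        = D ω * ∫ x in a..b, (if x < B ω / D ω then u' x else 0) := by rw [h1]
      _ = ∫ x in a..b, D ω * (if x < B ω / D ω then u' x else 0) := by
          rw [intervalIntegral.integral_const_mul]
      _ = ∫ x in a..b, f ω x := by
          apply intervalIntegral.integral_congr
          intro x _
          rw [hf]
          by_cases hx : x < B ω / D ω
          · have : D ω * x < B ω := by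
              rw [mul_comm]; exact (lt_div_iff₀ hD).1 hx
            simp [hx, this]
          · have : ¬ D ω * x < B ω := by
              rw [mul_comm]; exact fun h => hx ((lt_div_iff₀ hD).2 h)
            simp [hx, this]
      _ = ∫ x, f ω x ∂ν := by rw [intervalIntegral.integral_of_le hab.le, hν]
  -- integrability on product
  have hDnn : ∀ᵐ ω ∂μ, 0 ≤ D ω := hDpos.mono fun ω h => h.le
  have hSmeas : MeasurableSet {p : Ω × ℝ | D p.1 * p.2 < B p.1} := by
    apply measurableSet_lt
    · exact (hDm.comp measurable_fst).mul measurable_snd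
    · exact hBm.comp measurable_fst
  have hu'ae : AEMeasurable u' ν := by
    have : ContinuousOn u' (Set.Ioc a b) :=
      hu'cont.mono (fun x hx => lt_of_lt_of_le ha hx.1.le)
    exact this.aemeasurable measurableSet_Ioc
  have hu'snd : AEMeasurable (fun p : Ω × ℝ => u' p.2) (μ.prod ν) := by
    have hqmp : Measure.QuasiMeasurePreserving (Prod.snd : Ω × ℝ → ℝ)
        (μ.prod ν) ν := Measure.quasiMeasurePreserving_snd
    exact hu'ae.comp_quasiMeasurePreserving hqmp
  have hmeas : AEStronglyMeasurable (fun p : Ω × ℝ => f p.1 p.2) (μ.prod ν) := by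
    have : AEMeasurable (fun p : Ω × ℝ => f p.1 p.2) (μ.prod ν) := by
      have h1 : AEMeasurable (fun p : Ω × ℝ => D p.1 * u' p.2) (μ.prod ν) :=
        ((hDm.comp measurable_fst).aemeasurable).mul hu'snd
      have : (fun p : Ω × ℝ => f p.1 p.2)
          = {p : Ω × ℝ | D p.1 * p.2 < B p.1}.indicator
              (fun p => D p.1 * u' p.2) := by
        funext p
        by_cases hp : D p.1 * p.2 < B p.1
        · simp [hf, hp, Set.indicator_of_mem, Set.mem_setOf_eq]
        · simp [hf, hp, Set.indicator_of_notMem, Set.mem_setOf_eq]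
      rw [this]
      exact h1.indicator hSmeas
    exact this.aestronglyMeasurable
  have hint : Integrable (fun p : Ω × ℝ => f p.1 p.2) (μ.prod ν) := by
    apply Integrable.mono' (integrable_const (CD * M)) hmeas
    have hmem : ∀ᵐ p : Ω × ℝ ∂(μ.prod ν), p.2 ∈ Set.Ioc a b := by
      have : μ.prod ν = (μ.prod (volume : Measure ℝ)).restrict
          (Set.univ ×ˢ Set.Ioc a b) := by
        rw [hν, ← Measure.prod_restrict, Measure.restrict_univ]
      rw [this]
      filter_upwards [ae_restrict_mem ((MeasurableSet.univ).prod measurableSet_Ioc)]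
        with p hp
      exact hp.2
    have hDae : ∀ᵐ p : Ω × ℝ ∂(μ.prod ν), 0 ≤ D p.1 := by
      have hqmp : Measure.QuasiMeasurePreserving (Prod.fst : Ω × ℝ → Ω)
          (μ.prod ν) μ := Measure.quasiMeasurePreserving_fst
      exact hqmp.ae hDnn
    filter_upwards [hmem, hDae] with p hp hDp
    show ‖(if D p.1 * p.2 < B p.1 then D p.1 * u' p.2 else 0)‖ ≤ CD * M
    by_cases hc : D p.1 * p.2 < B p.1
    · simp only [hc, if_true]
      rw [norm_mul]
      have h1 : ‖D p.1‖ ≤ CD := by rw [Real.norm_eq_abs, abs_of_nonneg hDp]; exact hDbdd _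
      have h2 : ‖u' p.2‖ ≤ M := hM _ ⟨hp.1.le, hp.2⟩
      exact mul_le_mul h1 h2 (norm_nonneg _) (le_trans (norm_nonneg _) h1)
    · simp only [hc, if_false, norm_zero]
      have hMnn : 0 ≤ M := le_trans (norm_nonneg _) (hM a ⟨le_refl a, hab.le⟩)
      have hCDnn : 0 ≤ CD := le_trans (norm_nonneg (D p.1))
        (by rw [Real.norm_eq_abs, abs_of_nonneg hDp]; exact hDbdd _)
      positivity
  -- Step B : Fubini
  have stepB : ∫ ω, ∫ x, f ω x ∂ν ∂μ = ∫ x, ∫ ω, f ω x ∂μ ∂ν :=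
    integral_integral_swap hint
  -- Step C : inner integral
  have stepC : ∀ x, ∫ ω, f ω x ∂μ
      = (∫ ω, (if D ω * x < B ω then D ω else 0) ∂μ) * u' x := by
    intro x
    rw [← MeasureTheory.integral_mul_const]
    apply MeasureTheory.integral_congr_ae
    filter_upwards with ω
    rw [hf]
    by_cases hc : D ω * x < B ω <;> simp [hc]
  rw [stepA, stepB]
  -- Step D : assemble
  have stepD : ∫ x in a..b, γ * (∫ ω, (if D ω * x < B ω then D ω else 0) ∂μ) * u' x
      = γ * ∫ x, ∫ ω, f ω x ∂μ ∂ν := by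
    have : ∀ x, γ * (∫ ω, (if D ω * x < B ω then D ω else 0) ∂μ) * u' x
        = γ * (∫ ω, f ω x ∂μ) := by
      intro x
      rw [stepC x, mul_assoc]
    simp_rw [this]
    rw [intervalIntegral.integral_const_mul, intervalIntegral.integral_of_le hab.le, hν]
  rw [stepD]
end
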